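/- arXiv:2412.20074 — 3 statements merged into one kernel-verified Lean document; each statement's English description precedes it below -/
import Mathlib

section
/- Let D, Δ ∈ ℝ with 0 ≤ D ≤ Δ, let y ∈ ℝ with y ∈ {0, 1}, let K ≥ 0 and z : Fin K → ℝ with z k ∈ {0, 1} for every k. Then the set { t ∈ ℝ : 0 ≤ t and D − Δ·(1 − y + ∑_{k} z k) ≤ t } has a least element, and this least element equals D · y · ∏_{k} (1 − z k). -/
/-- Scalar core of the MISOCO reformulation of the collocation model: the set
`{t : 0 ≤ t ∧ D - Δ(1 - y + ∑ k, z k) ≤ t}` has a least element, equal to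
`D * y * ∏ k, (1 - z k)`. -/
theorem collocation_linearization_scalar
    (D Δ : ℝ) (hD : 0 ≤ D) (hDΔ : D ≤ Δ)
    (y : ℝ) (hy : y = 0 ∨ y = 1)
    (K : ℕ) (hK : 0 ≤ K) (z : Fin K → ℝ) (hz : ∀ k, z k = 0 ∨ z k = 1) :
    IsLeast {t : ℝ | 0 ≤ t ∧ D - Δ * (1 - y + ∑ k, z k) ≤ t}
      (D * y * ∏ k, (1 - z k)) := by
  have hzsum : (0:ℝ) ≤ ∑ k, z k :=
    Finset.sum_nonneg fun k _ => by rcases hz k with h | h <;> simp [h]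
  rcases hy with hy0 | hy1
  · -- y = 0, least element is 0
    have hval : D * y * ∏ k, (1 - z k) = 0 := by simp [hy0]
    rw [hval]
    constructor
    · refine ⟨le_refl 0, ?_⟩
      have : D ≤ Δ * (1 - y + ∑ k, z k) := by
        have h1 : (1:ℝ) ≤ 1 - y + ∑ k, z k := by rw [hy0]; linarith
        calc D ≤ Δ := hDΔ
          _ = Δ * 1 := by ring
          _ ≤ Δ * (1 - y + ∑ k, z k) :=
            mul_le_mul_of_nonneg_left h1 (le_trans hD hDΔ)
      linarith
    · intro t ht; exact ht.1
  · -- y = 1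
    by_cases hall : ∀ k, z k = 0
    · have hsum : ∑ k, z k = 0 := by simp [hall]
      have hprod : ∏ k, (1 - z k) = 1 := by
        apply Finset.prod_eq_one; intro k _; rw [hall k]; ring
      have hval : D * y * ∏ k, (1 - z k) = D := by rw [hprod, hy1]; ring
      rw [hval]
      constructor
      · exact ⟨hD, by rw [hy1, hsum]; simp⟩
      · intro t ht
        have := ht.2
        rw [hy1, hsum] at this
        simpa using this
    · push_neg at hall
      obtain ⟨k0, hk0⟩ := hall
      have hk01 : z k0 = 1 := (hz k0).resolve_left hk0
      have hprod : ∏ k, (1 - z k) = 0 :=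
        Finset.prod_eq_zero (Finset.mem_univ k0) (by rw [hk01]; ring)
      have hval : D * y * ∏ k, (1 - z k) = 0 := by rw [hprod]; ring
      rw [hval]
      constructor
      · refine ⟨le_refl 0, ?_⟩
        have hsum1 : (1:ℝ) ≤ ∑ k, z k := by
          have := Finset.single_le_sum
            (f := z) (fun k _ => by rcases hz k with h | h <;> simp [h])
            (Finset.mem_univ k0)
          rw [hk01] at this; exact this
        have : D ≤ Δ * (1 - y + ∑ k, z k) := by
          have h1 : (1:ℝ) ≤ 1 - y + ∑ k, z k := by rw [hy1]; linarith
          calc D ≤ Δ := hDΔ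
            _ = Δ * 1 := by ring
            _ ≤ Δ * (1 - y + ∑ k, z k) :=
              mul_le_mul_of_nonneg_left h1 (le_trans hD hDΔ)
        linarith
      · intro t ht; exact ht.1
end

section
/- Let d ≥ 1 and write ‖v‖₁ = ∑_{k ∈ Fin d} |v k| for v : Fin d → ℝ. Let P, P' ⊆ (Fin d → ℝ), let Δ ∈ ℝ satisfy ‖q − q'‖₁ ≤ Δ for all q ∈ P and q' ∈ P', let a ∈ P, a' ∈ P', and let z ∈ ℝ with z ∈ {0, 1}. Then the following three conditions are equivalent: (i) ‖a − a'‖₁ · z ≤ 0; (ii) ‖a − a'‖₁ ≤ Δ · (1 − z); (iii) z = 1 → a = a'. -/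
/-- Equivalence between the nonlinear collocation constraint
`‖a - a'‖₁ · z ≤ 0`, its big-M linearization `‖a - a'‖₁ ≤ Δ (1 - z)`, and the
logical condition `z = 1 → a = a'`. -/
theorem collocation_bigM_equivalence
    (d : ℕ) (hd : 1 ≤ d)
    (P P' : Set (Fin d → ℝ)) (Δ : ℝ)
    (hΔ : ∀ q ∈ P, ∀ q' ∈ P', ∑ k, |q k - q' k| ≤ Δ)
    (a : Fin d → ℝ) (ha : a ∈ P) (a' : Fin d → ℝ) (ha' : a' ∈ P')
    (z : ℝ) (hz : z = 0 ∨ z = 1) :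
    ((∑ k, |a k - a' k|) * z ≤ 0 ↔ ∑ k, |a k - a' k| ≤ Δ * (1 - z)) ∧
      ((∑ k, |a k - a' k| ≤ Δ * (1 - z)) ↔ (z = 1 → a = a')) := by
  have hnn : (0:ℝ) ≤ ∑ k, |a k - a' k| :=
    Finset.sum_nonneg fun k _ => abs_nonneg _
  have hbd : ∑ k, |a k - a' k| ≤ Δ := hΔ a ha a' ha'
  have hzero : (∑ k, |a k - a' k| ≤ 0) ↔ a = a' := by
    constructor
    · intro h
      have h0 : ∑ k, |a k - a' k| = 0 := le_antisymm h hnn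
      funext k
      have := (Finset.sum_eq_zero_iff_of_nonneg (fun k _ => abs_nonneg (a k - a' k))).mp h0 k (Finset.mem_univ k)
      have := abs_eq_zero.mp this
      linarith
    · intro h
      subst h
      simp
  rcases hz with h | h <;> subst h
  · constructor
    · simp only [mul_zero, sub_zero, mul_one]
      exact ⟨fun _ => hbd, fun _ => le_refl 0⟩
    · simp only [sub_zero, mul_one]
      constructor
      · intro _ h1; exact absurd h1 (by norm_num)
      · intro _; exact hbd
  · constructor
    · rw [mul_one, sub_self, mul_zero]
    · rw [sub_self, mul_zero, hzero]
      exact ⟨fun h _ => h, fun h => h rfl⟩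
end

section
/- Fix d, n, p ≥ 1 and let E = EuclideanSpace ℝ (Fin d). Let P : Fin n → Set E with each P i nonempty, let X ⊆ E be nonempty, let Δ¹ : Fin n → ℝ satisfy ‖a − x‖ ≤ Δ¹ i for all a ∈ P i and x ∈ X, and let Δ² : Fin n → Fin n → ℝ satisfy ∑_k |a k − a' k| ≤ Δ² i i' for all a ∈ P i and a' ∈ P i'. Write [·] for the 0/1 indicator of a Boolean. Define V₁ as the infimum, over all a : Fin n → E with a i ∈ P i, x : Fin p → E with x j ∈ X, assignments σ : Fin n → Fin p, and z : Fin n → Fin n → Bool satisfying (z i i' = true → a i = a i') for all i' < i, of ∑_{i} ‖a i − x (σ i)‖ · ∏_{i' < i} (1 − [z i i']). Define V₂ as the infimum, over all (a, x, σ, z) ranging over the same index and membership conditions together with dd : Fin n → Fin p → ℝ satisfying, for all i, j: dd i j ≥ 0 and dd i j ≥ ‖a i − x j‖ − Δ¹ i · (1 − [σ i = j] + ∑_{i' < i} [z i i']), and satisfying ∑_k |a i k − a i' k| ≤ Δ² i i' · (1 − [z i i']) for all i' < i, of ∑_{i, j} dd i j. Then V₁ = V₂. -/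
/-- The 0/1 indicator of a Boolean. -/
noncomputable def ind (b : Bool) : ℝ := if b then 1 else 0

lemma ind_nonneg (b : Bool) : 0 ≤ ind b := by unfold ind; split <;> norm_num

lemma ind_le_one (b : Bool) : ind b ≤ 1 := by unfold ind; split <;> norm_num

lemma ind_true : ind true = 1 := rfl

lemma ind_false : ind false = 0 := rfl

/-- The collocation regional continuous location problem (with the product
objective charging each collocated group only once) has the same optimal value
as its big-M mixed-integer second-order-cone reformulation with auxiliary
distance variables `dd`. -/
theorem collocation_misoco_reformulation
    (d n p : ℕ) (hd : 1 ≤ d) (hn : 1 ≤ n) (hp : 1 ≤ p)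
    (P : Fin n → Set (EuclideanSpace ℝ (Fin d)))
    (hPne : ∀ i, (P i).Nonempty)
    (X : Set (EuclideanSpace ℝ (Fin d))) (hXne : X.Nonempty)
    (Δ₁ : Fin n → ℝ)
    (hΔ₁ : ∀ i, ∀ a ∈ P i, ∀ x ∈ X, ‖a - x‖ ≤ Δ₁ i)
    (Δ₂ : Fin n → Fin n → ℝ)
    (hΔ₂ : ∀ i i', ∀ a ∈ P i, ∀ a' ∈ P i', ∑ k, |a k - a' k| ≤ Δ₂ i i') :
    sInf {v : ℝ |
        ∃ (a : Fin n → EuclideanSpace ℝ (Fin d))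
          (x : Fin p → EuclideanSpace ℝ (Fin d))
          (σ : Fin n → Fin p) (z : Fin n → Fin n → Bool),
          (∀ i, a i ∈ P i) ∧ (∀ j, x j ∈ X) ∧
          (∀ i i' : Fin n, i' < i → z i i' = true → a i = a i') ∧
          v = ∑ i, ‖a i - x (σ i)‖ * ∏ i' ∈ Finset.Iio i, (1 - ind (z i i'))} =
      sInf {v : ℝ |
        ∃ (a : Fin n → EuclideanSpace ℝ (Fin d))
          (x : Fin p → EuclideanSpace ℝ (Fin d))
          (σ : Fin n → Fin p) (z : Fin n → Fin n → Bool)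
          (dd : Fin n → Fin p → ℝ),
          (∀ i, a i ∈ P i) ∧ (∀ j, x j ∈ X) ∧
          (∀ i j, 0 ≤ dd i j ∧
            ‖a i - x j‖ -
                Δ₁ i * (1 - (if σ i = j then (1 : ℝ) else 0) +
                  ∑ i' ∈ Finset.Iio i, ind (z i i')) ≤ dd i j) ∧
          (∀ i i' : Fin n, i' < i →
            ∑ k, |a i k - a i' k| ≤ Δ₂ i i' * (1 - ind (z i i'))) ∧
          v = ∑ i, ∑ j, dd i j} := by
  set S1 : Set ℝ := {v : ℝ |
        ∃ (a : Fin n → EuclideanSpace ℝ (Fin d))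
          (x : Fin p → EuclideanSpace ℝ (Fin d))
          (σ : Fin n → Fin p) (z : Fin n → Fin n → Bool),
          (∀ i, a i ∈ P i) ∧ (∀ j, x j ∈ X) ∧
          (∀ i i' : Fin n, i' < i → z i i' = true → a i = a i') ∧
          v = ∑ i, ‖a i - x (σ i)‖ * ∏ i' ∈ Finset.Iio i, (1 - ind (z i i'))}
    with hS1
  set S2 : Set ℝ := {v : ℝ |
        ∃ (a : Fin n → EuclideanSpace ℝ (Fin d))
          (x : Fin p → EuclideanSpace ℝ (Fin d))
          (σ : Fin n → Fin p) (z : Fin n → Fin n → Bool)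
          (dd : Fin n → Fin p → ℝ),
          (∀ i, a i ∈ P i) ∧ (∀ j, x j ∈ X) ∧
          (∀ i j, 0 ≤ dd i j ∧
            ‖a i - x j‖ -
                Δ₁ i * (1 - (if σ i = j then (1 : ℝ) else 0) +
                  ∑ i' ∈ Finset.Iio i, ind (z i i')) ≤ dd i j) ∧
          (∀ i i' : Fin n, i' < i →
            ∑ k, |a i k - a i' k| ≤ Δ₂ i i' * (1 - ind (z i i'))) ∧
          v = ∑ i, ∑ j, dd i j} with hS2
  -- Δ₁ is nonnegative
  obtain ⟨x₀, hx₀⟩ := hXne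
  have hΔ₁0 : ∀ i, 0 ≤ Δ₁ i := fun i =>
    le_trans (norm_nonneg _) (hΔ₁ i _ (hPne i).choose_spec _ hx₀)
  -- S1 ⊆ S2
  have hsub : S1 ⊆ S2 := by
    rintro v ⟨a, x, σ, z, hP, hX, hz, rfl⟩
    refine ⟨a, x, σ, z,
      fun i j => max 0 (‖a i - x j‖ -
        Δ₁ i * (1 - (if σ i = j then (1 : ℝ) else 0) +
          ∑ i' ∈ Finset.Iio i, ind (z i i'))), hP, hX,
      fun i j => ⟨le_max_left _ _, le_max_right _ _⟩, ?_, ?_⟩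
    · intro i i' hlt
      cases hzb : z i i' with
      | true =>
        have := hz i i' hlt hzb
        simp [this, ind_true]
      | false =>
        simpa [ind_false] using hΔ₂ i i' _ (hP i) _ (hP i')
    · refine Finset.sum_congr rfl fun i _ => ?_
      by_cases hE : ∃ i' ∈ Finset.Iio i, z i i' = true
      · obtain ⟨i₀, hi₀, hzt⟩ := hE
        have hprod : (∏ i' ∈ Finset.Iio i, (1 - ind (z i i'))) = 0 :=
          Finset.prod_eq_zero hi₀ (by simp [hzt, ind_true])
        have hs1 : (1 : ℝ) ≤ ∑ i' ∈ Finset.Iio i, ind (z i i') := by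
          calc (1 : ℝ) = ind (z i i₀) := by simp [hzt, ind_true]
          _ ≤ _ := Finset.single_le_sum (fun k _ => ind_nonneg _) hi₀
        have hall : ∀ j, max 0 (‖a i - x j‖ -
            Δ₁ i * (1 - (if σ i = j then (1 : ℝ) else 0) +
              ∑ i' ∈ Finset.Iio i, ind (z i i'))) = 0 := by
          intro j
          have hc : (if σ i = j then (1 : ℝ) else 0) ≤ 1 := by split <;> norm_num
          have hcoef : (1 : ℝ) ≤ 1 - (if σ i = j then (1 : ℝ) else 0) +
              ∑ i' ∈ Finset.Iio i, ind (z i i') := by linarith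
          have : ‖a i - x j‖ ≤ Δ₁ i * (1 - (if σ i = j then (1 : ℝ) else 0) +
              ∑ i' ∈ Finset.Iio i, ind (z i i')) := by
            calc ‖a i - x j‖ ≤ Δ₁ i := hΔ₁ i _ (hP i) _ (hX j)
            _ = Δ₁ i * 1 := by ring
            _ ≤ _ := mul_le_mul_of_nonneg_left hcoef (hΔ₁0 i)
          exact max_eq_left (by linarith)
        rw [hprod]
        simp [hall]
      · push_neg at hE
        have hzf : ∀ i' ∈ Finset.Iio i, z i i' = false := by
          intro i' hi'; exact Bool.eq_false_iff.mpr fun h => hE i' hi' h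
        have hprod : (∏ i' ∈ Finset.Iio i, (1 - ind (z i i'))) = 1 := by
          rw [Finset.prod_congr rfl fun i' hi' => by rw [hzf i' hi', ind_false]]
          simp
        have hsum0 : (∑ i' ∈ Finset.Iio i, ind (z i i')) = 0 := by
          rw [Finset.sum_congr rfl fun i' hi' => by rw [hzf i' hi']]
          simp [ind_false]
        rw [hprod, mul_one]
        rw [Finset.sum_eq_single (σ i)]
        · show ‖a i - x (σ i)‖ = max 0 (‖a i - x (σ i)‖ -
            Δ₁ i * (1 - (if σ i = σ i then (1 : ℝ) else 0) +
              ∑ i' ∈ Finset.Iio i, ind (z i i')))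
          rw [if_pos rfl, hsum0, show (1 : ℝ) - 1 + 0 = 0 by ring, mul_zero,
            sub_zero]
          exact (max_eq_right (norm_nonneg _)).symm
        · intro j _ hne
          have hne' : σ i ≠ j := fun h => hne h.symm
          have hle : ‖a i - x j‖ ≤ Δ₁ i := hΔ₁ i _ (hP i) _ (hX j)
          show max 0 (‖a i - x j‖ -
            Δ₁ i * (1 - (if σ i = j then (1 : ℝ) else 0) +
              ∑ i' ∈ Finset.Iio i, ind (z i i'))) = 0
          rw [if_neg hne', hsum0, show (1 : ℝ) - 0 + 0 = 1 by ring, mul_one]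
          exact max_eq_left (by linarith)
        · intro h; exact absurd (Finset.mem_univ (σ i)) h
  -- every value in S2 dominates some value in S1
  have hdom : ∀ v ∈ S2, ∃ w ∈ S1, w ≤ v := by
    rintro v ⟨a, x, σ, z, dd, hP, hX, hdd, hcol, rfl⟩
    have hz1 : ∀ i i' : Fin n, i' < i → z i i' = true → a i = a i' := by
      intro i i' hlt hzt
      have h0 : ∑ k, |a i k - a i' k| ≤ 0 := by
        have := hcol i i' hlt
        rw [hzt, ind_true] at this
        simpa using this
      have heq : ∀ k ∈ Finset.univ, |a i k - a i' k| = 0 := by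
        rw [← Finset.sum_eq_zero_iff_of_nonneg (fun k _ => abs_nonneg _)]
        exact le_antisymm h0 (Finset.sum_nonneg fun k _ => abs_nonneg _)
      ext k
      have := heq k (Finset.mem_univ k)
      have := abs_eq_zero.mp this
      linarith
    refine ⟨_, ⟨a, x, σ, z, hP, hX, hz1, rfl⟩, ?_⟩
    refine Finset.sum_le_sum fun i _ => ?_
    by_cases hE : ∃ i' ∈ Finset.Iio i, z i i' = true
    · obtain ⟨i₀, hi₀, hzt⟩ := hE
      have hprod : (∏ i' ∈ Finset.Iio i, (1 - ind (z i i'))) = 0 :=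
        Finset.prod_eq_zero hi₀ (by simp [hzt, ind_true])
      rw [hprod, mul_zero]
      exact Finset.sum_nonneg fun j _ => (hdd i j).1
    · push_neg at hE
      have hzf : ∀ i' ∈ Finset.Iio i, z i i' = false := by
        intro i' hi'; exact Bool.eq_false_iff.mpr fun h => hE i' hi' h
      have hprod : (∏ i' ∈ Finset.Iio i, (1 - ind (z i i'))) = 1 := by
        rw [Finset.prod_congr rfl fun i' hi' => by rw [hzf i' hi', ind_false]]
        simp
      have hsum0 : (∑ i' ∈ Finset.Iio i, ind (z i i')) = 0 := by
        rw [Finset.sum_congr rfl fun i' hi' => by rw [hzf i' hi']]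
        simp [ind_false]
      rw [hprod, mul_one]
      have h1 : ‖a i - x (σ i)‖ ≤ dd i (σ i) := by
        have := (hdd i (σ i)).2
        rw [hsum0] at this
        simpa using this
      calc ‖a i - x (σ i)‖ ≤ dd i (σ i) := h1
      _ ≤ ∑ j, dd i j :=
        Finset.single_le_sum (fun j _ => (hdd i j).1) (Finset.mem_univ _)
  -- nonemptiness and boundedness
  have hS1ne : S1.Nonempty := by
    refine ⟨_, ⟨fun i => (hPne i).choose, fun _ => x₀, fun _ => ⟨0, hp⟩,
      fun _ _ => false, fun i => (hPne i).choose_spec, fun _ => hx₀,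
      fun i i' _ h => absurd h (by simp), rfl⟩⟩
  have hS2ne : S2.Nonempty := hS1ne.mono hsub
  have hbdd1 : BddBelow S1 := by
    refine ⟨0, ?_⟩
    rintro v ⟨a, x, σ, z, hP, hX, hz, rfl⟩
    refine Finset.sum_nonneg fun i _ => mul_nonneg (norm_nonneg _) ?_
    exact Finset.prod_nonneg fun i' _ => by linarith [ind_le_one (z i i')]
  have hbdd2 : BddBelow S2 := by
    refine ⟨0, ?_⟩
    rintro v ⟨a, x, σ, z, dd, hP, hX, hdd, hcol, rfl⟩
    exact Finset.sum_nonneg fun i _ => Finset.sum_nonneg fun j _ => (hdd i j).1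
  refine le_antisymm ?_ (csInf_le_csInf hbdd2 hS1ne hsub)
  refine le_csInf hS2ne fun v hv => ?_
  obtain ⟨w, hw, hwv⟩ := hdom v hv
  exact le_trans (csInf_le hbdd1 hw) hwv
end
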